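/- arXiv:2512.02051 — 2 statements merged into one kernel-verified Lean document; each statement's English description precedes it below -/
import Mathlib

section
/- Let f, g, a₁, a₂ be functions analytic in a neighbourhood of z₀ ∈ ℂ with a₁(z₀) ≠ a₂(z₀). Suppose f − a₁ and g − a₁ both vanish at z₀ to order at least 2. Then the meromorphic function φ = ((a₁'−a₂')(f−a₁) − (a₁−a₂)(f'−a₁'))·(f−g)/((f−a₁)(f−a₂)) is analytic at z₀ and φ(z₀) = 0. -/
open MeasureTheory Filter Metric

noncomputable section

namespace Nevanlinna

/-- The positive part of the logarithm. -/
def logp (x : ℝ) : ℝ := max (Real.log x) 0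

/-- The Nevanlinna proximity function `m(r, f)`. -/
def prox (f : ℂ → ℂ) (r : ℝ) : ℝ :=
  (2 * Real.pi)⁻¹ * ∫ θ in (0:ℝ)..(2 * Real.pi),
    logp ‖f (r * Complex.exp (θ * Complex.I))‖

/-- The pole order of `f` at `z`: the smallest `n : ℕ` such that
`(· - z) ^ (n + 1) * f` extends analytically across `z` (with value `0`);
it equals `0` when `f` is analytic at `z`, and junk when no such `n` exists. -/
def poleOrd (f : ℂ → ℂ) (z : ℂ) : ℕ :=
  sInf {n : ℕ | AnalyticAt ℂ (fun w => (w - z) ^ (n + 1) * f w) z}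

/-- The unintegrated counting function `n(t, f)` of the poles of `f`,
counted with multiplicity. -/
def poleCount (f : ℂ → ℂ) (t : ℝ) : ℝ :=
  ∑ᶠ z ∈ closedBall (0:ℂ) t, (poleOrd f z : ℝ)

/-- The integrated counting function `N(r, f)` of the poles of `f`. -/
def N (f : ℂ → ℂ) (r : ℝ) : ℝ :=
  (∫ t in (0:ℝ)..r, (poleCount f t - poleCount f 0) / t) +
    poleCount f 0 * Real.log r

/-- The Nevanlinna characteristic `T(r, f)`. -/
def T (f : ℂ → ℂ) (r : ℝ) : ℝ := prox f r + N f r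

/-- A quantity `S : ℝ → ℝ` is `S(r, f)`: it is `o(T(r, f))` as `r → ∞`, outside a
possible exceptional set of finite linear (Lebesgue) measure. -/
def SmallQty (S : ℝ → ℝ) (f : ℂ → ℂ) : Prop :=
  ∃ E : Set ℝ, volume E < ⊤ ∧
    Tendsto (fun r => S r / T f r) (atTop ⊓ 𝓟 Eᶜ) (nhds 0)

/-- A quantity `S : ℝ → ℝ` is `S(r, f)` with an exceptional set of finite
logarithmic measure. -/
def SmallQtyLog (S : ℝ → ℝ) (f : ℂ → ℂ) : Prop :=
  ∃ E : Set ℝ, E ⊆ Set.Ioi 1 ∧ (∫⁻ t in E, ENNReal.ofReal t⁻¹) < ⊤ ∧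
    Tendsto (fun r => S r / T f r) (atTop ⊓ 𝓟 Eᶜ) (nhds 0)

/-- `a` is a small function of `f`: `T(r, a) = S(r, f)`. -/
def SmallFn (a f : ℂ → ℂ) : Prop := SmallQty (T a) f

/-- The hyper-order `ρ₁(f)` of `f` is `< 1`. -/
def HyperOrderLtOne (f : ℂ → ℂ) : Prop :=
  Filter.limsup
    (fun r => ((Real.log (Real.log (T f r)) / Real.log r : ℝ) : EReal)) atTop < 1

/-- `f` and `g` share the (small) function `a` IM (ignoring multiplicities). -/
def ShareIM (f g a : ℂ → ℂ) : Prop := {z | f z = a z} = {z | g z = a z}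

/-- `f` is non-constant. -/
def Nonconst (f : ℂ → ℂ) : Prop := ¬ ∃ w : ℂ, ∀ z, f z = w

/-- The linear differential polynomial in shift
`𝓛_k(f(z+c)) = ∑_{j=0}^{k} b_j(z) f^{(j)}(z + c)`. -/
def L (k : ℕ) (b : ℕ → ℂ → ℂ) (c : ℂ) (f : ℂ → ℂ) : ℂ → ℂ :=
  fun z => ∑ j ∈ Finset.range (k + 1), b j z * iteratedDeriv j f (z + c)

/-- The unintegrated reduced counting function `n̄(t, a; f)` of the `a`-points of
`f` (ignoring multiplicities). -/
def nbarCount (f a : ℂ → ℂ) (t : ℝ) : ℝ :=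
  ((closedBall (0:ℂ) t) ∩ {z | f z = a z}).ncard

/-- The reduced integrated counting function `N̄(r, a; f)` of the `a`-points of
`f` (ignoring multiplicities). -/
def Nbar (f a : ℂ → ℂ) (r : ℝ) : ℝ :=
  (∫ t in (0:ℝ)..r, (nbarCount f a t - nbarCount f a 0) / t) +
    nbarCount f a 0 * Real.log r

/-- The unintegrated reduced counting function of the `a`-points of `f` of
multiplicity at least `2`. -/
def nbar2Count (f a : ℂ → ℂ) (t : ℝ) : ℝ :=
  ((closedBall (0:ℂ) t) ∩
    {z | f z = a z ∧ deriv (fun w => f w - a w) z = 0}).ncard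

/-- The reduced integrated counting function `N̄_{(2}(r, a; f)` of the `a`-points
of `f` of multiplicity at least `2`. -/
def Nbar2 (f a : ℂ → ℂ) (r : ℝ) : ℝ :=
  (∫ t in (0:ℝ)..r, (nbar2Count f a t - nbar2Count f a 0) / t) +
    nbar2Count f a 0 * Real.log r

/-- The sequence `ψ₁, ψ₂, …` : `psiSeq ψ₁ (i - 1)` is `ψ_i`, defined by the
recurrence `ψ_{i+1} = ψ_i' + ψ₁ ψ_i`. -/
def psiSeq (ψ₁ : ℂ → ℂ) : ℕ → ℂ → ℂ
  | 0 => ψ₁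
  | n + 1 => fun z => deriv (psiSeq ψ₁ n) z + ψ₁ z * psiSeq ψ₁ n z

end Nevanlinna

open Nevanlinna

private lemma analyticAt_deriv'' {f : ℂ → ℂ} {z₀ : ℂ} (hf : AnalyticAt ℂ f z₀) :
    AnalyticAt ℂ (deriv f) z₀ := by
  obtain ⟨s, hs, h⟩ := hf.exists_mem_nhds_analyticOnNhd
  exact h.deriv z₀ (mem_of_mem_nhds hs)

private lemma pow_factor'' {h : ℂ → ℂ} {z₀ : ℂ} (hh : AnalyticAt ℂ h z₀) {m : ℕ}
    (ho : (m : ℕ∞) ≤ analyticOrderAt h z₀) :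
    ∃ q : ℂ → ℂ, AnalyticAt ℂ q z₀ ∧ ∀ᶠ z in nhds z₀, h z = (z - z₀) ^ m * q z := by
  rcases eq_or_ne (analyticOrderAt h z₀) ⊤ with ht | ht
  · refine ⟨0, analyticAt_const, ?_⟩
    filter_upwards [analyticOrderAt_eq_top.mp ht] with z hz
    simp [hz]
  · obtain ⟨n, hn⟩ : ∃ n : ℕ, (n : ℕ∞) = analyticOrderAt h z₀ := ⟨_, ENat.coe_toNat ht⟩
    obtain ⟨u, hu, hu0, hequ⟩ := (hh.analyticOrderAt_eq_natCast (n := n)).mp hn.symm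
    have hmn : m ≤ n := by
      have := hn ▸ ho
      exact Nat.cast_le.mp this
    refine ⟨fun z => (z - z₀) ^ (n - m) * u z,
      ((analyticAt_id.sub analyticAt_const).pow _).mul hu, ?_⟩
    filter_upwards [hequ] with z hz
    rw [hz, smul_eq_mul, ← mul_assoc, ← pow_add]
    congr 2
    omega

/-- If `f, g, a₁, a₂` are analytic near `z₀`, `a₁(z₀) ≠ a₂(z₀)`, and both
`f - a₁` and `g - a₁` vanish at `z₀` to order at least `2`, then the
meromorphic function
`φ = ((a₁'-a₂')(f-a₁) - (a₁-a₂)(f'-a₁'))(f-g)/((f-a₁)(f-a₂))`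
is analytic at `z₀` with `φ(z₀) = 0`. -/
theorem statement10
    (z₀ : ℂ) (f g a₁ a₂ : ℂ → ℂ)
    (hf : AnalyticAt ℂ f z₀) (hg : AnalyticAt ℂ g z₀)
    (ha₁ : AnalyticAt ℂ a₁ z₀) (ha₂ : AnalyticAt ℂ a₂ z₀)
    (hne : a₁ z₀ ≠ a₂ z₀)
    (hordf : 2 ≤ analyticOrderAt (f - a₁) z₀)
    (hordg : 2 ≤ analyticOrderAt (g - a₁) z₀) :
    ∃ φ : ℂ → ℂ, AnalyticAt ℂ φ z₀ ∧ φ z₀ = 0 ∧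
      ∀ᶠ z in nhds z₀, (f z - a₁ z) * (f z - a₂ z) ≠ 0 →
        φ z = ((deriv a₁ z - deriv a₂ z) * (f z - a₁ z) -
            (a₁ z - a₂ z) * (deriv f z - deriv a₁ z)) * (f z - g z) /
          ((f z - a₁ z) * (f z - a₂ z)) := by
  rcases eq_or_ne (analyticOrderAt (f - a₁) z₀) ⊤ with ht | ht
  · refine ⟨0, analyticAt_const, rfl, ?_⟩
    filter_upwards [analyticOrderAt_eq_top.mp ht] with z hz hcond
    exact absurd (by rw [show f z - a₁ z = 0 from hz, zero_mul]) hcond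
  · obtain ⟨n, hn⟩ : ∃ n : ℕ, (n : ℕ∞) = analyticOrderAt (f - a₁) z₀ := ⟨_, ENat.coe_toNat ht⟩
    have hn2 : 2 ≤ n := by
      have h2 := hordf
      rw [← hn] at h2
      exact_mod_cast h2
    obtain ⟨m, rfl⟩ : ∃ m, n = m + 2 := ⟨n - 2, by omega⟩
    obtain ⟨u, hu, hu0, hequ⟩ := ((hf.sub ha₁).analyticOrderAt_eq_natCast (n := m + 2)).mp hn.symm
    obtain ⟨v, hv, heqv⟩ := pow_factor'' (hg.sub ha₁) hordg
    set W : ℂ → ℂ := fun z => (z - z₀) ^ m * u z - v z with hW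
    have hWA : AnalyticAt ℂ W z₀ :=
      (((analyticAt_id.sub analyticAt_const).pow m).mul hu).sub hv
    have hfz : f z₀ = a₁ z₀ := by
      have h0 : f z₀ - a₁ z₀ = (z₀ - z₀) ^ (m + 2) • u z₀ := hequ.self_of_nhds
      have : f z₀ - a₁ z₀ = 0 := by simpa using h0
      exact sub_eq_zero.mp this
    have hfa₂ : f z₀ - a₂ z₀ ≠ 0 := by
      rw [hfz]; exact sub_ne_zero.mpr hne
    refine ⟨fun z => ((deriv a₁ z - deriv a₂ z) * ((z - z₀) * u z)
        - (a₁ z - a₂ z) * ((m + 2 : ℕ) * u z + (z - z₀) * deriv u z)) * ((z - z₀) * W z)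
        / (u z * (f z - a₂ z)), ?_, ?_, ?_⟩
    · apply AnalyticAt.div
      · exact ((((analyticAt_deriv'' ha₁).sub (analyticAt_deriv'' ha₂)).mul
          ((analyticAt_id.sub analyticAt_const).mul hu)).sub
          ((ha₁.sub ha₂).mul ((analyticAt_const.mul hu).add
            ((analyticAt_id.sub analyticAt_const).mul (analyticAt_deriv'' hu))))).mul
          ((analyticAt_id.sub analyticAt_const).mul hWA)
      · exact hu.mul (hf.sub ha₂)
      · exact mul_ne_zero hu0 hfa₂
    · simp
    · have hderiv : ∀ᶠ z in nhds z₀,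
          deriv f z - deriv a₁ z =
            ((m + 2 : ℕ) * (z - z₀) ^ (m + 1)) * u z + (z - z₀) ^ (m + 2) * deriv u z := by
        have e1 : (fun z => f z - a₁ z) =ᶠ[nhds z₀]
            (fun z => (z - z₀) ^ (m + 2) * u z) := by
          filter_upwards [hequ] with z hz
          simpa using hz
        filter_upwards [e1.deriv, hf.eventually_analyticAt, ha₁.eventually_analyticAt,
          hu.eventually_analyticAt] with z hz hfz' ha₁z' huz'
        have d1 : HasDerivAt (fun x => (x - z₀) ^ (m + 2))
            (((m + 2 : ℕ) : ℂ) * (z - z₀) ^ (m + 2 - 1) * 1) z :=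
          ((hasDerivAt_id z).sub_const z₀).pow (m + 2)
        have d2 : HasDerivAt (fun x => (x - z₀) ^ (m + 2) * u x)
            ((((m + 2 : ℕ) : ℂ) * (z - z₀) ^ (m + 2 - 1) * 1) * u z
              + (z - z₀) ^ (m + 2) * deriv u z) z :=
          d1.mul huz'.differentiableAt.hasDerivAt
        have d3 : deriv (fun z => f z - a₁ z) z = deriv f z - deriv a₁ z :=
          deriv_sub hfz'.differentiableAt ha₁z'.differentiableAt
        rw [← d3, hz, d2.deriv]
        push_cast
        ring
      filter_upwards [hequ, heqv, hderiv] with z hz1 hz2 hz3 hcond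
      have hz1' : f z - a₁ z = (z - z₀) ^ (m + 2) * u z := by simpa using hz1
      have hz2' : g z - a₁ z = (z - z₀) ^ 2 * v z := hz2
      obtain ⟨h1, h2⟩ := mul_ne_zero_iff.mp hcond
      rw [hz1'] at h1
      obtain ⟨hp, hu1⟩ := mul_ne_zero_iff.mp h1
      have hzz : z - z₀ ≠ 0 := fun h => hp (by rw [h]; simp)
      have hfg : f z - g z = (z - z₀) ^ 2 * W z := by
        have : f z - g z = (f z - a₁ z) - (g z - a₁ z) := by ring
        rw [this, hz1', hz2', hW]
        ring
      rw [hz1', hz3, hfg]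
      field_simp
      ring
end
end

section
/- Let f, g, a₁, a₂ be functions analytic in a neighbourhood of z₀ ∈ ℂ with a₁(z₀) ≠ a₂(z₀) and a₁'(z₀) ≠ a₂'(z₀). Suppose that on this neighbourhood the identity ((a₁'−a₂')(f−a₁) − (a₁−a₂)(f'−a₁'))·(f−g) = (a₁'−a₂')·(f−a₁)(f−a₂) holds, that f − a₁ vanishes at z₀ to order exactly p ≥ 2, and that g − a₁ vanishes at z₀ to order exactly 1. Then g'(z₀) − a₁'(z₀) = (a₁'(z₀) − a₂'(z₀))/p. -/
open MeasureTheory Filter Metric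

noncomputable section

open Nevanlinna

private lemma analyticAt_deriv' {h : ℂ → ℂ} {z₀ : ℂ} (hh : AnalyticAt ℂ h z₀) :
    AnalyticAt ℂ (deriv h) z₀ := by
  obtain ⟨s, hs, ha⟩ := hh.exists_mem_nhds_analyticOnNhd
  exact ha.deriv z₀ (mem_of_mem_nhds hs)

/-- Local computation: if near `z₀` the identity
`((a₁'-a₂')(f-a₁) - (a₁-a₂)(f'-a₁'))(f-g) = (a₁'-a₂')(f-a₁)(f-a₂)` holds
(i.e. `φ ≡ a₁'-a₂'`), `a₁(z₀) ≠ a₂(z₀)`, `a₁'(z₀) ≠ a₂'(z₀)`, `f - a₁`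
vanishes at `z₀` to order exactly `p ≥ 2` and `g - a₁` to order exactly `1`,
then `g'(z₀) - a₁'(z₀) = (a₁'(z₀) - a₂'(z₀))/p`. -/
theorem statement12
    (z₀ : ℂ) (f g a₁ a₂ : ℂ → ℂ) (p : ℕ) (hp : 2 ≤ p)
    (hf : AnalyticAt ℂ f z₀) (hg : AnalyticAt ℂ g z₀)
    (ha₁ : AnalyticAt ℂ a₁ z₀) (ha₂ : AnalyticAt ℂ a₂ z₀)
    (hne : a₁ z₀ ≠ a₂ z₀) (hne' : deriv a₁ z₀ ≠ deriv a₂ z₀)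
    (hid : ∀ᶠ z in nhds z₀,
      ((deriv a₁ z - deriv a₂ z) * (f z - a₁ z) -
          (a₁ z - a₂ z) * (deriv f z - deriv a₁ z)) * (f z - g z)
        = (deriv a₁ z - deriv a₂ z) * ((f z - a₁ z) * (f z - a₂ z)))
    (hordf : analyticOrderAt (f - a₁) z₀ = (p : ℕ∞))
    (hordg : analyticOrderAt (g - a₁) z₀ = (1 : ℕ∞)) :
    deriv g z₀ - deriv a₁ z₀ = (deriv a₁ z₀ - deriv a₂ z₀) / (p : ℂ) := by
  obtain ⟨q, rfl⟩ : ∃ q, p = q + 2 := ⟨p - 2, by omega⟩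
  obtain ⟨h, hh, hh0, hF⟩ := ((hf.sub ha₁).analyticOrderAt_eq_natCast (n := q + 2)).mp hordf
  obtain ⟨k, hk, hk0, hG⟩ := ((hg.sub ha₁).analyticOrderAt_eq_natCast (n := 1)).mp hordg
  simp only [smul_eq_mul, Pi.sub_apply] at hF hG
  have hFe : (fun z => f z - a₁ z) =ᶠ[nhds z₀] (fun z => (z - z₀) ^ (q + 2) * h z) := hF
  have hGe : (fun z => g z - a₁ z) =ᶠ[nhds z₀] (fun z => (z - z₀) ^ 1 * k z) := hG
  set Q : ℂ → ℂ := fun z =>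
    k z * ((a₁ z - a₂ z) * (((q : ℂ) + 2) * h z + (z - z₀) * deriv h z)
        - (z - z₀) * (deriv a₁ z - deriv a₂ z) * h z)
      - (a₁ z - a₂ z) * h z * ((deriv a₁ z - deriv a₂ z)
        + (((q : ℂ) + 2) * (z - z₀) ^ (q + 1) * h z + (z - z₀) ^ (q + 2) * deriv h z))
    with hQdef
  -- the key pointwise identity
  have hev : ∀ᶠ z in nhds z₀, (z - z₀) ^ (q + 2) * Q z = 0 := by
    filter_upwards [hF, hG, hid, hFe.deriv, hh.eventually_analyticAt,
      hf.eventually_analyticAt, ha₁.eventually_analyticAt] with z e1 e2 e3 e4 hhz hfz ha1z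
    have hdR : HasDerivAt (fun w => (w - z₀) ^ (q + 2) * h w)
        ((((q : ℂ) + 2) * (z - z₀) ^ (q + 1)) * h z + (z - z₀) ^ (q + 2) * deriv h z) z := by
      have h1 : HasDerivAt (fun w => (w - z₀) ^ (q + 2)) (((q : ℂ) + 2) * (z - z₀) ^ (q + 1)) z := by
        have := ((hasDerivAt_id z).sub_const z₀).pow (q + 2)
        norm_num at this
        exact this
      exact h1.mul hhz.differentiableAt.hasDerivAt
    have e4' : deriv f z - deriv a₁ z
        = ((q : ℂ) + 2) * (z - z₀) ^ (q + 1) * h z + (z - z₀) ^ (q + 2) * deriv h z := by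
      have h5 := e4
      rw [deriv_fun_sub hfz.differentiableAt ha1z.differentiableAt, hdR.deriv] at h5
      linear_combination h5
    have ef : f z = a₁ z + (z - z₀) ^ (q + 2) * h z := by linear_combination e1
    have eg : g z = a₁ z + (z - z₀) ^ 1 * k z := by linear_combination e2
    have edf : deriv f z = deriv a₁ z
        + (((q : ℂ) + 2) * (z - z₀) ^ (q + 1) * h z + (z - z₀) ^ (q + 2) * deriv h z) := by
      linear_combination e4'
    rw [ef, eg, edf] at e3
    simp only [hQdef]
    linear_combination e3
  -- continuity of Q at z₀
  have hQc : ContinuousAt Q z₀ := by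
    have c1 := hk.continuousAt
    have c2 := hh.continuousAt
    have c3 := (analyticAt_deriv' hh).continuousAt
    have c4 := ha₁.continuousAt
    have c5 := ha₂.continuousAt
    have c6 := (analyticAt_deriv' ha₁).continuousAt
    have c7 := (analyticAt_deriv' ha₂).continuousAt
    rw [hQdef]
    fun_prop
  -- Q vanishes at z₀
  have hQ0 : Q z₀ = 0 := by
    have h1 : Tendsto Q (nhdsWithin z₀ {z₀}ᶜ) (nhds (Q z₀)) := hQc.continuousWithinAt
    have h2 : Q =ᶠ[nhdsWithin z₀ {z₀}ᶜ] fun _ => 0 := by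
      filter_upwards [hev.filter_mono nhdsWithin_le_nhds, self_mem_nhdsWithin] with z hz hz'
      exact (mul_eq_zero.mp hz).resolve_left
        (pow_ne_zero _ (sub_ne_zero.mpr (Set.mem_compl_singleton_iff.mp hz')))
    exact tendsto_nhds_unique h1 (tendsto_const_nhds.congr' h2.symm)
  -- evaluate Q at z₀
  have hQ0' : (a₁ z₀ - a₂ z₀) * h z₀
      * (((q : ℂ) + 2) * k z₀ - (deriv a₁ z₀ - deriv a₂ z₀)) = 0 := by
    have h5 := hQ0
    simp only [hQdef, sub_self, zero_mul, mul_zero, add_zero, zero_add,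
      zero_pow (by omega : q + 1 ≠ 0), zero_pow (by omega : q + 2 ≠ 0)] at h5
    linear_combination h5
  -- the derivative of g - a₁ at z₀ is k z₀
  have hdg : deriv g z₀ - deriv a₁ z₀ = k z₀ := by
    have h1 : deriv (fun z => g z - a₁ z) z₀
        = deriv (fun z => (z - z₀) ^ 1 * k z) z₀ := hGe.deriv_eq
    have h2 : HasDerivAt (fun z => (z - z₀) ^ 1 * k z) (k z₀) z₀ := by
      have h3 : HasDerivAt (fun z => (z - z₀) ^ 1) (1 : ℂ) z₀ := by
        simpa using ((hasDerivAt_id z₀).sub_const z₀).pow 1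
      have := h3.mul hk.differentiableAt.hasDerivAt
      simpa [Pi.mul_def] using this
    rw [deriv_fun_sub hg.differentiableAt ha₁.differentiableAt] at h1
    rw [h1, h2.deriv]
  rw [hdg]
  have hB : a₁ z₀ - a₂ z₀ ≠ 0 := sub_ne_zero.mpr hne
  have h8 : ((q : ℂ) + 2) * k z₀ - (deriv a₁ z₀ - deriv a₂ z₀) = 0 :=
    (mul_eq_zero.mp hQ0').resolve_left (mul_ne_zero hB hh0)
  have hq : ((q : ℂ) + 2) ≠ 0 := by
    have : ((q + 2 : ℕ) : ℂ) ≠ 0 := Nat.cast_ne_zero.mpr (by omega)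
    push_cast at this
    exact this
  push_cast
  field_simp
  linear_combination h8
end
end
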